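/- There is an absolute constant C > 0 such that for all positive integers a and b one has E[(Y_a − τ(a))² (Y_b − τ(b))²] ≤ C (σ₃(gcd(a, b)) + σ(a) σ(b)), where σ₃(n) = ∑_{d ∣ n} d³; in particular E[(Y_a − τ(a))² (Y_b − τ(b))²] ≤ C′ a² b² for an absolute constant C′ > 0. -/

import Mathlib

open MeasureTheory ProbabilityTheory Finset
open scoped ENNReal NNReal

noncomputable def pois (l : ℝ) (n : ℕ) : ℝ := Real.exp (-l) * l ^ n / n.factorial

lemma pois_nonneg {l : ℝ} (hl : 0 ≤ l) (n : ℕ) : 0 ≤ pois l n := by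
  unfold pois; positivity

lemma summable_pois (l : ℝ) : Summable (pois l) := by
  refine ((Real.summable_pow_div_factorial l).mul_left (Real.exp (-l))).congr fun n => ?_
  simp [pois, mul_div_assoc]

lemma tsum_pois (l : ℝ) : ∑' n, pois l n = 1 := by
  have h : ∑' n : ℕ, l ^ n / n.factorial = Real.exp l := by
    rw [Real.exp_eq_exp_ℝ, NormedSpace.exp_eq_tsum_div]
  simp only [pois, mul_div_assoc]
  rw [tsum_mul_left, h, ← Real.exp_add]
  simp

lemma pois_shift (l : ℝ) (j n : ℕ) :
    (((n + j).descFactorial j : ℝ)) * pois l (n + j) = l ^ j * pois l n := by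
  have h : ((n + j).descFactorial j : ℝ) * (n.factorial : ℝ) = ((n + j).factorial : ℝ) := by
    have := Nat.choose_mul_factorial_mul_factorial (Nat.le_add_left j n)
    rw [Nat.add_sub_cancel] at this
    rw [Nat.descFactorial_eq_factorial_mul_choose]
    exact_mod_cast by
      calc (j.factorial * (n + j).choose j) * n.factorial
          = (n + j).choose j * j.factorial * n.factorial := by ring
        _ = (n + j).factorial := this
  have h1 : ((n + j).factorial : ℝ) ≠ 0 := Nat.cast_ne_zero.2 (Nat.factorial_ne_zero _)
  have h2 : ((n).factorial : ℝ) ≠ 0 := Nat.cast_ne_zero.2 (Nat.factorial_ne_zero _)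
  unfold pois
  rw [pow_add]
  field_simp
  linear_combination (l ^ n * l ^ j) * h

lemma summable_desc_pois (l : ℝ) (j : ℕ) :
    Summable (fun n => (n.descFactorial j : ℝ) * pois l n) := by
  rw [← summable_nat_add_iff j]
  simp only [pois_shift]
  exact (summable_pois l).mul_left _

lemma tsum_desc_pois (l : ℝ) (j : ℕ) :
    ∑' n, (n.descFactorial j : ℝ) * pois l n = l ^ j := by
  have hs := summable_desc_pois l j
  have := Summable.sum_add_tsum_nat_add j hs
  rw [← this]
  have h0 : ∑ i ∈ Finset.range j, (i.descFactorial j : ℝ) * pois l i = 0 := by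
    apply Finset.sum_eq_zero
    intro i hi
    rw [Nat.descFactorial_eq_zero_iff_lt.2 (Finset.mem_range.1 hi)]
    simp
  simp only [pois_shift]
  rw [h0, tsum_mul_left, tsum_pois, zero_add, mul_one]

section NatId
lemma natid1 (n : ℕ) : (n : ℝ) = (n.descFactorial 1 : ℝ) := by simp

lemma natid2 (n : ℕ) : (n : ℝ) ^ 2 = (n.descFactorial 2 : ℝ) + (n.descFactorial 1 : ℝ) := by
  have : n ^ 2 = n.descFactorial 2 + n.descFactorial 1 := by
    rcases n with _ | k
    · simp
    · simp only [Nat.succ_descFactorial_succ, Nat.descFactorial_one, Nat.descFactorial_zero]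
      ring
  exact_mod_cast congrArg (Nat.cast : ℕ → ℝ) this

lemma natid3 (n : ℕ) : (n : ℝ) ^ 3 =
    (n.descFactorial 3 : ℝ) + 3 * (n.descFactorial 2 : ℝ) + (n.descFactorial 1 : ℝ) := by
  have : n ^ 3 = n.descFactorial 3 + 3 * n.descFactorial 2 + n.descFactorial 1 := by
    rcases n with _ | _ | k
    · simp
    · decide
    · simp only [Nat.succ_descFactorial_succ, Nat.descFactorial_one, Nat.descFactorial_zero]
      ring
  exact_mod_cast congrArg (Nat.cast : ℕ → ℝ) this

lemma natid4 (n : ℕ) : (n : ℝ) ^ 4 =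
    (n.descFactorial 4 : ℝ) + 6 * (n.descFactorial 3 : ℝ) + 7 * (n.descFactorial 2 : ℝ)
      + (n.descFactorial 1 : ℝ) := by
  have : n ^ 4 = n.descFactorial 4 + 6 * n.descFactorial 3 + 7 * n.descFactorial 2
      + n.descFactorial 1 := by
    rcases n with _ | _ | _ | k
    · simp
    · decide
    · decide
    · simp only [Nat.succ_descFactorial_succ, Nat.descFactorial_one, Nat.descFactorial_zero]
      ring
  exact_mod_cast congrArg (Nat.cast : ℕ → ℝ) this
end NatId

section MomTsum
variable (l : ℝ)

lemma summable_pow_pois0 : Summable (fun n : ℕ => (n : ℝ) ^ 0 * pois l n) := by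
  simpa using summable_pois l
lemma summable_pow_pois1 : Summable (fun n : ℕ => (n : ℝ) ^ 1 * pois l n) := by
  refine (summable_desc_pois l 1).congr fun n => ?_
  rw [pow_one, ← natid1]
lemma summable_pow_pois2 : Summable (fun n : ℕ => (n : ℝ) ^ 2 * pois l n) := by
  refine ((summable_desc_pois l 2).add (summable_desc_pois l 1)).congr fun n => ?_
  rw [natid2]; ring
lemma summable_pow_pois3 : Summable (fun n : ℕ => (n : ℝ) ^ 3 * pois l n) := by
  refine (((summable_desc_pois l 3).add ((summable_desc_pois l 2).mul_left 3)).add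
    (summable_desc_pois l 1)).congr fun n => ?_
  rw [natid3]; ring
lemma summable_pow_pois4 : Summable (fun n : ℕ => (n : ℝ) ^ 4 * pois l n) := by
  refine ((((summable_desc_pois l 4).add ((summable_desc_pois l 3).mul_left 6)).add
    ((summable_desc_pois l 2).mul_left 7)).add (summable_desc_pois l 1)).congr fun n => ?_
  rw [natid4]; ring

lemma tsum_pow_pois1 : ∑' n : ℕ, (n : ℝ) ^ 1 * pois l n = l := by
  have h : ∀ n : ℕ, (n:ℝ)^1 * pois l n = (n.descFactorial 1 : ℝ) * pois l n := by
    intro n; rw [pow_one, natid1]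
  rw [tsum_congr h, tsum_desc_pois, pow_one]

lemma tsum_pow_pois2 : ∑' n : ℕ, (n : ℝ) ^ 2 * pois l n = l ^ 2 + l := by
  have h : ∀ n : ℕ, (n:ℝ)^2 * pois l n
      = (n.descFactorial 2 : ℝ) * pois l n + (n.descFactorial 1 : ℝ) * pois l n := by
    intro n; rw [natid2]; ring
  rw [tsum_congr h, Summable.tsum_add (summable_desc_pois l 2) (summable_desc_pois l 1),
    tsum_desc_pois, tsum_desc_pois, pow_one]

lemma tsum_pow_pois3 : ∑' n : ℕ, (n : ℝ) ^ 3 * pois l n = l ^ 3 + 3 * l ^ 2 + l := by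
  have h : ∀ n : ℕ, (n:ℝ)^3 * pois l n
      = ((n.descFactorial 3 : ℝ) * pois l n + 3 * ((n.descFactorial 2 : ℝ) * pois l n))
        + (n.descFactorial 1 : ℝ) * pois l n := by
    intro n; rw [natid3]; ring
  rw [tsum_congr h,
    Summable.tsum_add ((summable_desc_pois l 3).add ((summable_desc_pois l 2).mul_left 3))
      (summable_desc_pois l 1),
    Summable.tsum_add (summable_desc_pois l 3) ((summable_desc_pois l 2).mul_left 3),
    tsum_mul_left, tsum_desc_pois, tsum_desc_pois, tsum_desc_pois, pow_one]

lemma tsum_pow_pois4 : ∑' n : ℕ, (n : ℝ) ^ 4 * pois l n = l ^ 4 + 6 * l ^ 3 + 7 * l ^ 2 + l := by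
  have h : ∀ n : ℕ, (n:ℝ)^4 * pois l n
      = (((n.descFactorial 4 : ℝ) * pois l n + 6 * ((n.descFactorial 3 : ℝ) * pois l n))
        + 7 * ((n.descFactorial 2 : ℝ) * pois l n)) + (n.descFactorial 1 : ℝ) * pois l n := by
    intro n; rw [natid4]; ring
  rw [tsum_congr h,
    Summable.tsum_add (((summable_desc_pois l 4).add ((summable_desc_pois l 3).mul_left 6)).add
      ((summable_desc_pois l 2).mul_left 7)) (summable_desc_pois l 1),
    Summable.tsum_add ((summable_desc_pois l 4).add ((summable_desc_pois l 3).mul_left 6))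
      ((summable_desc_pois l 2).mul_left 7),
    Summable.tsum_add (summable_desc_pois l 4) ((summable_desc_pois l 3).mul_left 6),
    tsum_mul_left, tsum_mul_left, tsum_desc_pois, tsum_desc_pois, tsum_desc_pois,
    tsum_desc_pois, pow_one]

end MomTsum

section Bridge
variable {Ω : Type*} [MeasurableSpace Ω] {P : Measure Ω}

lemma nat_rv_integral (W : Ω → ℕ) (hW : Measurable W) {l : ℝ} (hl : 0 ≤ l)
    (hlaw : ∀ n, P {ω | W ω = n} = ENNReal.ofReal (pois l n)) (g : ℕ → ℝ)
    (hg : ∀ n, 0 ≤ g n) (hsum : Summable (fun n : ℕ => g n * pois l n)) :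
    Integrable (fun ω => g (W ω)) P ∧ ∫ ω, g (W ω) ∂P = ∑' n : ℕ, g n * pois l n := by
  have hμ : ∀ n : ℕ, (P.map W) {n} = ENNReal.ofReal (pois l n) := by
    intro n
    rw [Measure.map_apply hW (measurableSet_singleton n)]
    exact hlaw n
  have hgm : Integrable g (P.map W) := by
    refine ⟨(measurable_from_nat (f := g)).aestronglyMeasurable, ?_⟩
    rw [HasFiniteIntegral, lintegral_countable']
    have heq : ∀ n : ℕ, ‖g n‖ₑ * (P.map W) {n} = ENNReal.ofReal (g n * pois l n) := by
      intro n
      rw [hμ, ← ofReal_norm, ← ENNReal.ofReal_mul (norm_nonneg _),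
        Real.norm_of_nonneg (hg n)]
    rw [tsum_congr heq, ← ENNReal.ofReal_tsum_of_nonneg
      (fun n => mul_nonneg (hg n) (pois_nonneg hl n)) hsum]
    exact ENNReal.ofReal_lt_top
  have hint : Integrable (fun ω => g (W ω)) P := by
    have := (integrable_map_measure (measurable_from_nat (f := g)).aestronglyMeasurable
      hW.aemeasurable).1 hgm
    exact this
  refine ⟨hint, ?_⟩
  rw [← integral_map hW.aemeasurable (measurable_from_nat (f := g)).aestronglyMeasurable,
    integral_countable' hgm]
  apply tsum_congr
  intro n
  rw [measureReal_def, hμ, ENNReal.toReal_ofReal (pois_nonneg hl n), smul_eq_mul, mul_comm]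
end Bridge

section Xmom
variable {Ω : Type*} [MeasurableSpace Ω] {P : Measure Ω} [IsProbabilityMeasure P]

lemma Xmom (W : Ω → ℕ) (hW : Measurable W) (d : ℕ) (hd : 0 < d)
    (hlaw : ∀ n, P {ω | W ω = n} = ENNReal.ofReal (pois (1 / (d : ℝ)) n)) :
    (Integrable (fun ω => ((d : ℝ) * W ω - 1)) P ∧
      Integrable (fun ω => ((d : ℝ) * W ω - 1) ^ 2) P ∧
      Integrable (fun ω => ((d : ℝ) * W ω - 1) ^ 3) P ∧
      Integrable (fun ω => ((d : ℝ) * W ω - 1) ^ 4) P) ∧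
    (∫ ω, ((d : ℝ) * W ω - 1) ∂P = 0 ∧
      ∫ ω, ((d : ℝ) * W ω - 1) ^ 2 ∂P = (d : ℝ) ∧
      ∫ ω, ((d : ℝ) * W ω - 1) ^ 4 ∂P = (d : ℝ) ^ 3 + 3 * (d : ℝ) ^ 2) := by
  have hdR : (0 : ℝ) < (d : ℝ) := by exact_mod_cast hd
  set l : ℝ := 1 / (d : ℝ) with hldef
  have hl : 0 ≤ l := by positivity
  have hnn : ∀ m : ℕ, ∀ n : ℕ, 0 ≤ ((n : ℝ)) ^ m := fun m n => by positivity
  have e1 := nat_rv_integral W hW hl hlaw (fun n => (n : ℝ) ^ 1) (hnn 1) (summable_pow_pois1 l)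
  have e2 := nat_rv_integral W hW hl hlaw (fun n => (n : ℝ) ^ 2) (hnn 2) (summable_pow_pois2 l)
  have e3 := nat_rv_integral W hW hl hlaw (fun n => (n : ℝ) ^ 3) (hnn 3) (summable_pow_pois3 l)
  have e4 := nat_rv_integral W hW hl hlaw (fun n => (n : ℝ) ^ 4) (hnn 4) (summable_pow_pois4 l)
  rw [tsum_pow_pois1] at e1
  rw [tsum_pow_pois2] at e2
  rw [tsum_pow_pois3] at e3
  rw [tsum_pow_pois4] at e4
  have j1 : Integrable (fun ω => (W ω : ℝ) ^ 1) P := e1.1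
  have j2 : Integrable (fun ω => (W ω : ℝ) ^ 2) P := e2.1
  have j3 : Integrable (fun ω => (W ω : ℝ) ^ 3) P := e3.1
  have j4 : Integrable (fun ω => (W ω : ℝ) ^ 4) P := e4.1
  have v1 : ∫ ω, (W ω : ℝ) ^ 1 ∂P = l := e1.2
  have v2 : ∫ ω, (W ω : ℝ) ^ 2 ∂P = l ^ 2 + l := e2.2
  have v3 : ∫ ω, (W ω : ℝ) ^ 3 ∂P = l ^ 3 + 3 * l ^ 2 + l := e3.2
  have v4 : ∫ ω, (W ω : ℝ) ^ 4 ∂P = l ^ 4 + 6 * l ^ 3 + 7 * l ^ 2 + l := e4.2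
  have f1 : (fun ω => ((d : ℝ) * W ω - 1)) =
      fun ω => (d : ℝ) * ((W ω : ℝ) ^ 1) - 1 := by funext ω; ring
  have f2 : (fun ω => ((d : ℝ) * W ω - 1) ^ 2) =
      fun ω => ((d : ℝ) ^ 2 * ((W ω : ℝ) ^ 2) - 2 * (d : ℝ) * ((W ω : ℝ) ^ 1)) + 1 := by
    funext ω; ring
  have f3 : (fun ω => ((d : ℝ) * W ω - 1) ^ 3) =
      fun ω => (((d : ℝ) ^ 3 * ((W ω : ℝ) ^ 3) - 3 * (d : ℝ) ^ 2 * ((W ω : ℝ) ^ 2))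
        + 3 * (d : ℝ) * ((W ω : ℝ) ^ 1)) - 1 := by
    funext ω; ring
  have f4 : (fun ω => ((d : ℝ) * W ω - 1) ^ 4) =
      fun ω => ((((d : ℝ) ^ 4 * ((W ω : ℝ) ^ 4) - 4 * (d : ℝ) ^ 3 * ((W ω : ℝ) ^ 3))
        + 6 * (d : ℝ) ^ 2 * ((W ω : ℝ) ^ 2)) - 4 * (d : ℝ) * ((W ω : ℝ) ^ 1)) + 1 := by
    funext ω; ring
  have k1 : Integrable (fun ω => (d : ℝ) * ((W ω : ℝ) ^ 1)) P := j1.const_mul _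
  have k2 : Integrable (fun ω => ((d : ℝ) ^ 2 * ((W ω : ℝ) ^ 2)
      - 2 * (d : ℝ) * ((W ω : ℝ) ^ 1))) P := (j2.const_mul _).sub (j1.const_mul _)
  have k3 : Integrable (fun ω => (((d : ℝ) ^ 3 * ((W ω : ℝ) ^ 3)
      - 3 * (d : ℝ) ^ 2 * ((W ω : ℝ) ^ 2)) + 3 * (d : ℝ) * ((W ω : ℝ) ^ 1))) P :=
    ((j3.const_mul _).sub (j2.const_mul _)).add (j1.const_mul _)
  have k4a : Integrable (fun ω => ((d : ℝ) ^ 4 * ((W ω : ℝ) ^ 4)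
      - 4 * (d : ℝ) ^ 3 * ((W ω : ℝ) ^ 3))) P := (j4.const_mul _).sub (j3.const_mul _)
  have k4b : Integrable (fun ω => (((d : ℝ) ^ 4 * ((W ω : ℝ) ^ 4)
      - 4 * (d : ℝ) ^ 3 * ((W ω : ℝ) ^ 3)) + 6 * (d : ℝ) ^ 2 * ((W ω : ℝ) ^ 2))) P :=
    k4a.add (j2.const_mul _)
  have k4c : Integrable (fun ω => ((((d : ℝ) ^ 4 * ((W ω : ℝ) ^ 4)
      - 4 * (d : ℝ) ^ 3 * ((W ω : ℝ) ^ 3)) + 6 * (d : ℝ) ^ 2 * ((W ω : ℝ) ^ 2))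
      - 4 * (d : ℝ) * ((W ω : ℝ) ^ 1))) P := k4b.sub (j1.const_mul _)
  have I1 : Integrable (fun ω => ((d : ℝ) * W ω - 1)) P := by
    rw [f1]; exact k1.sub (integrable_const 1)
  have I2 : Integrable (fun ω => ((d : ℝ) * W ω - 1) ^ 2) P := by
    rw [f2]; exact k2.add (integrable_const 1)
  have I3 : Integrable (fun ω => ((d : ℝ) * W ω - 1) ^ 3) P := by
    rw [f3]; exact k3.sub (integrable_const 1)
  have I4 : Integrable (fun ω => ((d : ℝ) * W ω - 1) ^ 4) P := by
    rw [f4]; exact k4c.add (integrable_const 1)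
  have hc : ∫ (_ : Ω), (1 : ℝ) ∂P = 1 := by simp
  refine ⟨⟨I1, I2, I3, I4⟩, ?_, ?_, ?_⟩
  · rw [f1, integral_sub k1 (integrable_const 1), integral_const_mul, v1, hc, hldef]
    field_simp
    norm_num
  · rw [f2, integral_add k2 (integrable_const 1),
      integral_sub (j2.const_mul _) (j1.const_mul _), integral_const_mul, integral_const_mul,
      v1, v2, hc, hldef]
    field_simp
    ring
  · rw [f4, integral_add k4c (integrable_const 1), integral_sub k4b (j1.const_mul _),
      integral_add k4a (j2.const_mul _), integral_sub (j4.const_mul _) (j3.const_mul _),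
      integral_const_mul, integral_const_mul, integral_const_mul, integral_const_mul,
      v1, v2, v3, v4, hc, hldef]
    field_simp
    ring
end Xmom

section SumMom
variable {Ω : Type*} [MeasurableSpace Ω] {P : Measure Ω} [IsProbabilityMeasure P]

lemma sum_moments (X : ℕ → Ω → ℝ)
    (hI : ∀ d : ℕ, 0 < d →
      ((Integrable (fun ω => X d ω ^ 1) P ∧ Integrable (fun ω => X d ω ^ 2) P ∧
        Integrable (fun ω => X d ω ^ 3) P ∧ Integrable (fun ω => X d ω ^ 4) P) ∧
       (∫ ω, X d ω ^ 1 ∂P = 0 ∧ ∫ ω, X d ω ^ 2 ∂P = (d : ℝ) ∧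
        ∫ ω, X d ω ^ 4 ∂P = (d : ℝ) ^ 3 + 3 * (d : ℝ) ^ 2)))
    (hind : ∀ (S : Finset ℕ) (x : ℕ), x ∉ S → ∀ i j : ℕ,
      IndepFun (fun ω => (∑ d ∈ S, X d ω) ^ i) (fun ω => X x ω ^ j) P) :
    ∀ S : Finset ℕ, (∀ d ∈ S, 0 < d) →
      ((Integrable (fun ω => (∑ d ∈ S, X d ω) ^ 1) P ∧
        Integrable (fun ω => (∑ d ∈ S, X d ω) ^ 2) P ∧
        Integrable (fun ω => (∑ d ∈ S, X d ω) ^ 3) P ∧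
        Integrable (fun ω => (∑ d ∈ S, X d ω) ^ 4) P) ∧
       (∫ ω, (∑ d ∈ S, X d ω) ^ 1 ∂P = 0 ∧
        ∫ ω, (∑ d ∈ S, X d ω) ^ 2 ∂P = ∑ d ∈ S, (d : ℝ) ∧
        ∫ ω, (∑ d ∈ S, X d ω) ^ 4 ∂P = (∑ d ∈ S, (d : ℝ) ^ 3) + 3 * (∑ d ∈ S, (d : ℝ)) ^ 2)) := by
  intro S
  induction S using Finset.induction_on with
  | empty =>
    intro _
    constructor
    · refine ⟨?_, ?_, ?_, ?_⟩ <;> · simp only [Finset.sum_empty]; simp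
    · refine ⟨?_, ?_, ?_⟩ <;> · simp only [Finset.sum_empty]; simp
  | @insert x S hxS ih =>
    intro hpos
    obtain ⟨⟨iA1, iA2, iA3, iA4⟩, vA1, vA2, vA4⟩ := ih fun d hd => hpos d (mem_insert_of_mem hd)
    obtain ⟨⟨iW1, iW2, iW3, iW4⟩, vW1, vW2, vW4⟩ := hI x (hpos x (mem_insert_self x S))
    have hd1 := hind S x hxS
    have mk : ∀ (i j : ℕ), Integrable (fun ω => (∑ d ∈ S, X d ω) ^ i) P →
        Integrable (fun ω => X x ω ^ j) P →
        Integrable (fun ω => (∑ d ∈ S, X d ω) ^ i * X x ω ^ j) P := fun i j hi hj =>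
      (hd1 i j).integrable_mul hi hj
    have mi : ∀ (i j : ℕ), Integrable (fun ω => (∑ d ∈ S, X d ω) ^ i) P →
        Integrable (fun ω => X x ω ^ j) P →
        ∫ ω, (∑ d ∈ S, X d ω) ^ i * X x ω ^ j ∂P
          = (∫ ω, (∑ d ∈ S, X d ω) ^ i ∂P) * ∫ ω, X x ω ^ j ∂P := fun i j hi hj =>
      (hd1 i j).integral_fun_mul_eq_mul_integral hi.aestronglyMeasurable hj.aestronglyMeasurable
    have f1 : (fun ω => (∑ d ∈ insert x S, X d ω) ^ 1) =
        fun ω => (∑ d ∈ S, X d ω) ^ 1 + X x ω ^ 1 := by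
      funext ω; rw [Finset.sum_insert hxS]; ring
    have f2 : (fun ω => (∑ d ∈ insert x S, X d ω) ^ 2) =
        fun ω => ((∑ d ∈ S, X d ω) ^ 2 + 2 * ((∑ d ∈ S, X d ω) ^ 1 * X x ω ^ 1))
          + X x ω ^ 2 := by
      funext ω; rw [Finset.sum_insert hxS]; ring
    have f3 : (fun ω => (∑ d ∈ insert x S, X d ω) ^ 3) =
        fun ω => (((∑ d ∈ S, X d ω) ^ 3 + 3 * ((∑ d ∈ S, X d ω) ^ 2 * X x ω ^ 1))
          + 3 * ((∑ d ∈ S, X d ω) ^ 1 * X x ω ^ 2)) + X x ω ^ 3 := by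
      funext ω; rw [Finset.sum_insert hxS]; ring
    have f4 : (fun ω => (∑ d ∈ insert x S, X d ω) ^ 4) =
        fun ω => (((((∑ d ∈ S, X d ω) ^ 4 + 4 * ((∑ d ∈ S, X d ω) ^ 3 * X x ω ^ 1))
          + 6 * ((∑ d ∈ S, X d ω) ^ 2 * X x ω ^ 2))
          + 4 * ((∑ d ∈ S, X d ω) ^ 1 * X x ω ^ 3)) + X x ω ^ 4) := by
      funext ω; rw [Finset.sum_insert hxS]; ring
    have k11 := mk 1 1 iA1 iW1
    have k21 := mk 2 1 iA2 iW1
    have k12 := mk 1 2 iA1 iW2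
    have k31 := mk 3 1 iA3 iW1
    have k22 := mk 2 2 iA2 iW2
    have k13 := mk 1 3 iA1 iW3
    have c2 : Integrable (fun ω => (∑ d ∈ S, X d ω) ^ 2
        + 2 * ((∑ d ∈ S, X d ω) ^ 1 * X x ω ^ 1)) P := by
      exact iA2.add (k11.const_mul 2)
    have c3a : Integrable (fun ω => (∑ d ∈ S, X d ω) ^ 3
        + 3 * ((∑ d ∈ S, X d ω) ^ 2 * X x ω ^ 1)) P := by
      exact iA3.add (k21.const_mul 3)
    have c3b : Integrable (fun ω => ((∑ d ∈ S, X d ω) ^ 3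
        + 3 * ((∑ d ∈ S, X d ω) ^ 2 * X x ω ^ 1)) + 3 * ((∑ d ∈ S, X d ω) ^ 1 * X x ω ^ 2)) P := by
      exact c3a.add (k12.const_mul 3)
    have c4a : Integrable (fun ω => (∑ d ∈ S, X d ω) ^ 4
        + 4 * ((∑ d ∈ S, X d ω) ^ 3 * X x ω ^ 1)) P := by
      exact iA4.add (k31.const_mul 4)
    have c4b : Integrable (fun ω => ((∑ d ∈ S, X d ω) ^ 4
        + 4 * ((∑ d ∈ S, X d ω) ^ 3 * X x ω ^ 1)) + 6 * ((∑ d ∈ S, X d ω) ^ 2 * X x ω ^ 2)) P := by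
      exact c4a.add (k22.const_mul 6)
    have c4c : Integrable (fun ω => (((∑ d ∈ S, X d ω) ^ 4
        + 4 * ((∑ d ∈ S, X d ω) ^ 3 * X x ω ^ 1)) + 6 * ((∑ d ∈ S, X d ω) ^ 2 * X x ω ^ 2))
        + 4 * ((∑ d ∈ S, X d ω) ^ 1 * X x ω ^ 3)) P := by
      exact c4b.add (k13.const_mul 4)
    have I1 : Integrable (fun ω => (∑ d ∈ insert x S, X d ω) ^ 1) P := by
      rw [f1]; exact iA1.add iW1
    have I2 : Integrable (fun ω => (∑ d ∈ insert x S, X d ω) ^ 2) P := by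
      rw [f2]; exact c2.add iW2
    have I3 : Integrable (fun ω => (∑ d ∈ insert x S, X d ω) ^ 3) P := by
      rw [f3]; exact c3b.add iW3
    have I4 : Integrable (fun ω => (∑ d ∈ insert x S, X d ω) ^ 4) P := by
      rw [f4]
      exact c4c.add iW4
    refine ⟨⟨I1, I2, I3, I4⟩, ?_, ?_, ?_⟩
    · rw [f1, integral_add iA1 iW1, vA1, vW1]; norm_num
    · rw [f2, integral_add c2 iW2,
        integral_add iA2 (k11.const_mul 2), integral_const_mul, mi 1 1 iA1 iW1,
        vA1, vA2, vW2, Finset.sum_insert hxS]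
      ring
    · rw [f4, integral_add c4c iW4,
        integral_add c4b (k13.const_mul 4),
        integral_add c4a (k22.const_mul 6),
        integral_add iA4 (k31.const_mul 4),
        integral_const_mul, integral_const_mul, integral_const_mul,
        mi 3 1 iA3 iW1, mi 2 2 iA2 iW2, mi 1 3 iA1 iW3,
        vA1, vA2, vA4, vW1, vW2, vW4, Finset.sum_insert hxS, Finset.sum_insert hxS]
      ring
end SumMom

set_option maxHeartbeats 2000000 in
/-- Let `{Z k}` be mutually independent Poisson random variables with parameters `1/k`,
and `Y a = ∑_{d ∣ a} d • Z d`. There is an absolute constant `C > 0` such that for all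
positive integers `a, b`,
`E[(Y a − τ(a))² (Y b − τ(b))²] ≤ C (σ₃(gcd(a,b)) + σ(a) σ(b))`, where
`σ₃(n) = ∑_{d ∣ n} d³`; in particular the left side is `≤ C' a² b²` for an absolute
constant `C' > 0`. -/
theorem stmt6 {Ω : Type*} [MeasurableSpace Ω] (P : Measure Ω) [IsProbabilityMeasure P]
    (Z : ℕ → Ω → ℕ)
    (hmeas : ∀ k, Measurable (Z k))
    (hpois : ∀ k : ℕ, 1 ≤ k → ∀ n : ℕ,
      P {ω | Z k ω = n} =
        ENNReal.ofReal (Real.exp (-(1 / k)) * (1 / k : ℝ) ^ n / n.factorial))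
    (hindep : iIndepFun Z P) :
    ∃ C : ℝ, 0 < C ∧ ∃ C' : ℝ, 0 < C' ∧ ∀ a b : ℕ, 0 < a → 0 < b →
      (∫ ω, ((∑ d ∈ a.divisors, (d : ℝ) * (Z d ω : ℝ)) - (a.divisors.card : ℝ)) ^ 2 *
          ((∑ d ∈ b.divisors, (d : ℝ) * (Z d ω : ℝ)) - (b.divisors.card : ℝ)) ^ 2 ∂P
        ≤ C * ((∑ d ∈ (Nat.gcd a b).divisors, (d : ℝ) ^ 3) +
            (∑ d ∈ a.divisors, (d : ℝ)) * (∑ d ∈ b.divisors, (d : ℝ)))) ∧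
      (∫ ω, ((∑ d ∈ a.divisors, (d : ℝ) * (Z d ω : ℝ)) - (a.divisors.card : ℝ)) ^ 2 *
          ((∑ d ∈ b.divisors, (d : ℝ) * (Z d ω : ℝ)) - (b.divisors.card : ℝ)) ^ 2 ∂P
        ≤ C' * ((a : ℝ) ^ 2 * (b : ℝ) ^ 2)) := by
  classical
  -- moments of the individual centered variables
  have hXm : ∀ d : ℕ, 0 < d →
      ((Integrable (fun ω => ((d : ℝ) * (Z d ω : ℝ) - 1) ^ 1) P ∧
        Integrable (fun ω => ((d : ℝ) * (Z d ω : ℝ) - 1) ^ 2) P ∧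
        Integrable (fun ω => ((d : ℝ) * (Z d ω : ℝ) - 1) ^ 3) P ∧
        Integrable (fun ω => ((d : ℝ) * (Z d ω : ℝ) - 1) ^ 4) P) ∧
       (∫ ω, ((d : ℝ) * (Z d ω : ℝ) - 1) ^ 1 ∂P = 0 ∧
        ∫ ω, ((d : ℝ) * (Z d ω : ℝ) - 1) ^ 2 ∂P = (d : ℝ) ∧
        ∫ ω, ((d : ℝ) * (Z d ω : ℝ) - 1) ^ 4 ∂P = (d : ℝ) ^ 3 + 3 * (d : ℝ) ^ 2)) := by
    intro d hd
    have h := Xmom (P := P) (Z d) (hmeas d) d hd (fun n => by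
      have h2 := hpois d hd n
      simpa [pois] using h2)
    simp only [pow_one]
    exact ⟨⟨h.1.1, h.1.2.1, h.1.2.2.1, h.1.2.2.2⟩, h.2.1, h.2.2.1, h.2.2.2⟩
  have hcomap_le : ∀ n : ℕ,
      MeasurableSpace.comap (Z n) inferInstance ≤ ‹MeasurableSpace Ω› :=
    fun n => (hmeas n).comap_le
  -- independence of functions measurable w.r.t. disjoint blocks
  have hblocks : ∀ S T : Finset ℕ, Disjoint S T → ∀ f g : Ω → ℝ,
      Measurable[⨆ i ∈ (S : Set ℕ), MeasurableSpace.comap (Z i) inferInstance] f →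
      Measurable[⨆ i ∈ (T : Set ℕ), MeasurableSpace.comap (Z i) inferInstance] g →
      IndepFun f g P := by
    intro S T hST f g hf hg
    have h : Indep (⨆ i ∈ (S : Set ℕ), MeasurableSpace.comap (Z i) inferInstance)
        (⨆ i ∈ ((S : Set ℕ))ᶜ, MeasurableSpace.comap (Z i) inferInstance) P :=
      indep_biSup_compl hcomap_le hindep (S : Set ℕ)
    have h2 : Indep (⨆ i ∈ (S : Set ℕ), MeasurableSpace.comap (Z i) inferInstance)
        (⨆ i ∈ (T : Set ℕ), MeasurableSpace.comap (Z i) inferInstance) P := by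
      refine indep_of_indep_of_le_right h ?_
      refine iSup₂_le fun i hi => ?_
      have hiS : i ∈ ((S : Set ℕ))ᶜ := by
        simp only [Set.mem_compl_iff, Finset.mem_coe]
        exact fun hmem => (Finset.disjoint_left.1 hST) hmem (Finset.mem_coe.1 hi)
      exact le_iSup₂ (f := fun i (_ : i ∈ ((S : Set ℕ))ᶜ) =>
        MeasurableSpace.comap (Z i) inferInstance) i hiS
    exact indep_of_indep_of_le_left (indep_of_indep_of_le_right h2 hg.comap_le) hf.comap_le
  have hXmeasS : ∀ (S : Finset ℕ) (d : ℕ), d ∈ S →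
      Measurable[⨆ i ∈ (S : Set ℕ), MeasurableSpace.comap (Z i) inferInstance]
        (fun ω => (d : ℝ) * (Z d ω : ℝ) - 1) := by
    intro S d hd
    have hZd : Measurable[⨆ i ∈ (S : Set ℕ), MeasurableSpace.comap (Z i) inferInstance]
        (Z d) :=
      Measurable.of_comap_le (le_iSup₂ (f := fun i (_ : i ∈ (S : Set ℕ)) =>
        MeasurableSpace.comap (Z i) inferInstance) d (Finset.mem_coe.2 hd))
    exact (measurable_from_nat (f := fun n : ℕ => (d : ℝ) * (n : ℝ) - 1)).comp hZd
  have hTmeasS : ∀ (S S' : Finset ℕ), S' ⊆ S → ∀ k : ℕ,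
      Measurable[⨆ i ∈ (S : Set ℕ), MeasurableSpace.comap (Z i) inferInstance]
        (fun ω => (∑ d ∈ S', ((d : ℝ) * (Z d ω : ℝ) - 1)) ^ k) := by
    intro S S' hsub k
    exact (Finset.measurable_sum S' (fun d hd => hXmeasS S d (hsub hd))).pow_const k
  have hsum := sum_moments (P := P) (fun d ω => (d : ℝ) * (Z d ω : ℝ) - 1) hXm
    (by
      intro S x hx i j
      refine hblocks S {x} (Finset.disjoint_singleton_right.2 hx) _ _
        (hTmeasS S S subset_rfl i) ?_
      exact (hXmeasS {x} x (Finset.mem_singleton_self x)).pow_const j)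
  refine ⟨5, by norm_num, 10, by norm_num, fun a b ha hb => ?_⟩
  have hgcd : 0 < Nat.gcd a b := Nat.gcd_pos_of_pos_left _ ha
  have hga : (Nat.gcd a b).divisors ⊆ a.divisors := Nat.divisors_subset_of_dvd ha.ne' (Nat.gcd_dvd_left a b)
  have hgb : (Nat.gcd a b).divisors ⊆ b.divisors := Nat.divisors_subset_of_dvd hb.ne' (Nat.gcd_dvd_right a b)
  have hdisj1 : Disjoint a.divisors (b.divisors \ (Nat.gcd a b).divisors) := by
    rw [Finset.disjoint_left]
    intro d hd hd'
    obtain ⟨hdb, hdg⟩ := Finset.mem_sdiff.1 hd'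
    exact hdg (Nat.mem_divisors.2 ⟨Nat.dvd_gcd (Nat.dvd_of_mem_divisors hd)
      (Nat.dvd_of_mem_divisors hdb), hgcd.ne'⟩)
  have hdisj2 : Disjoint (a.divisors \ (Nat.gcd a b).divisors) (Nat.gcd a b).divisors := Finset.sdiff_disjoint
  obtain ⟨⟨_, iA2, _, iA4⟩, _, vA2, _⟩ := hsum a.divisors (fun d hd => Nat.pos_of_mem_divisors hd)
  obtain ⟨⟨_, iG2, iG3, iG4⟩, _, vG2, vG4⟩ := hsum (Nat.gcd a b).divisors (fun d hd => Nat.pos_of_mem_divisors hd)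
  obtain ⟨⟨iB01, iB02, _, _⟩, vB01, vB02, _⟩ := hsum (b.divisors \ (Nat.gcd a b).divisors)
    (fun d hd => Nat.pos_of_mem_divisors (Finset.mem_sdiff.1 hd).1)
  obtain ⟨⟨iA01, iA02, _, _⟩, vA01, vA02, _⟩ := hsum (a.divisors \ (Nat.gcd a b).divisors)
    (fun d hd => Nat.pos_of_mem_divisors (Finset.mem_sdiff.1 hd).1)
  -- restate with beta-reduced types
  have jA2 : Integrable (fun ω => (∑ d ∈ a.divisors, ((d : ℝ) * (Z d ω : ℝ) - 1)) ^ 2) P := iA2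
  have jA4 : Integrable (fun ω => (∑ d ∈ a.divisors, ((d : ℝ) * (Z d ω : ℝ) - 1)) ^ 4) P := iA4
  have jG2 : Integrable (fun ω => (∑ d ∈ (Nat.gcd a b).divisors, ((d : ℝ) * (Z d ω : ℝ) - 1)) ^ 2) P := iG2
  have jG3 : Integrable (fun ω => (∑ d ∈ (Nat.gcd a b).divisors, ((d : ℝ) * (Z d ω : ℝ) - 1)) ^ 3) P := iG3
  have jG4 : Integrable (fun ω => (∑ d ∈ (Nat.gcd a b).divisors, ((d : ℝ) * (Z d ω : ℝ) - 1)) ^ 4) P := iG4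
  have jB01 : Integrable (fun ω => (∑ d ∈ (b.divisors \ (Nat.gcd a b).divisors), ((d : ℝ) * (Z d ω : ℝ) - 1)) ^ 1) P := iB01
  have jB02 : Integrable (fun ω => (∑ d ∈ (b.divisors \ (Nat.gcd a b).divisors), ((d : ℝ) * (Z d ω : ℝ) - 1)) ^ 2) P := iB02
  have jA01 : Integrable (fun ω => (∑ d ∈ (a.divisors \ (Nat.gcd a b).divisors), ((d : ℝ) * (Z d ω : ℝ) - 1)) ^ 1) P := iA01
  have jA02 : Integrable (fun ω => (∑ d ∈ (a.divisors \ (Nat.gcd a b).divisors), ((d : ℝ) * (Z d ω : ℝ) - 1)) ^ 2) P := iA02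
  have wA2 : ∫ ω, (∑ d ∈ a.divisors, ((d : ℝ) * (Z d ω : ℝ) - 1)) ^ 2 ∂P = ∑ d ∈ a.divisors, (d : ℝ) := vA2
  have wG2 : ∫ ω, (∑ d ∈ (Nat.gcd a b).divisors, ((d : ℝ) * (Z d ω : ℝ) - 1)) ^ 2 ∂P = ∑ d ∈ (Nat.gcd a b).divisors, (d : ℝ) := vG2
  have wG4 : ∫ ω, (∑ d ∈ (Nat.gcd a b).divisors, ((d : ℝ) * (Z d ω : ℝ) - 1)) ^ 4 ∂P = (∑ d ∈ (Nat.gcd a b).divisors, (d : ℝ) ^ 3) + 3 * (∑ d ∈ (Nat.gcd a b).divisors, (d : ℝ)) ^ 2 := vG4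
  have wB01 : ∫ ω, (∑ d ∈ (b.divisors \ (Nat.gcd a b).divisors), ((d : ℝ) * (Z d ω : ℝ) - 1)) ^ 1 ∂P = 0 := vB01
  have wB02 : ∫ ω, (∑ d ∈ (b.divisors \ (Nat.gcd a b).divisors), ((d : ℝ) * (Z d ω : ℝ) - 1)) ^ 2 ∂P = ∑ d ∈ (b.divisors \ (Nat.gcd a b).divisors), (d : ℝ) := vB02
  have wA01 : ∫ ω, (∑ d ∈ (a.divisors \ (Nat.gcd a b).divisors), ((d : ℝ) * (Z d ω : ℝ) - 1)) ^ 1 ∂P = 0 := vA01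
  have wA02 : ∫ ω, (∑ d ∈ (a.divisors \ (Nat.gcd a b).divisors), ((d : ℝ) * (Z d ω : ℝ) - 1)) ^ 2 ∂P = ∑ d ∈ (a.divisors \ (Nat.gcd a b).divisors), (d : ℝ) := vA02
  -- independence instances
  have hI1 : IndepFun (fun ω => (∑ d ∈ a.divisors, ((d : ℝ) * (Z d ω : ℝ) - 1)) ^ 2) (fun ω => (∑ d ∈ (b.divisors \ (Nat.gcd a b).divisors), ((d : ℝ) * (Z d ω : ℝ) - 1)) ^ 2) P :=
    hblocks _ _ hdisj1 _ _ (hTmeasS a.divisors a.divisors subset_rfl 2) (hTmeasS (b.divisors \ (Nat.gcd a b).divisors) (b.divisors \ (Nat.gcd a b).divisors) subset_rfl 2)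
  have mA2G : Measurable[⨆ i ∈ ((a.divisors : Finset ℕ) : Set ℕ),
      MeasurableSpace.comap (Z i) inferInstance]
      (fun ω => (∑ d ∈ a.divisors, ((d : ℝ) * (Z d ω : ℝ) - 1)) ^ 2 * (∑ d ∈ (Nat.gcd a b).divisors, ((d : ℝ) * (Z d ω : ℝ) - 1)) ^ 1) :=
    (hTmeasS a.divisors a.divisors subset_rfl 2).mul (hTmeasS a.divisors (Nat.gcd a b).divisors hga 1)
  have hI2 : IndepFun (fun ω => (∑ d ∈ a.divisors, ((d : ℝ) * (Z d ω : ℝ) - 1)) ^ 2 * (∑ d ∈ (Nat.gcd a b).divisors, ((d : ℝ) * (Z d ω : ℝ) - 1)) ^ 1) (fun ω => (∑ d ∈ (b.divisors \ (Nat.gcd a b).divisors), ((d : ℝ) * (Z d ω : ℝ) - 1)) ^ 1) P :=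
    hblocks _ _ hdisj1 _ _ mA2G (hTmeasS (b.divisors \ (Nat.gcd a b).divisors) (b.divisors \ (Nat.gcd a b).divisors) subset_rfl 1)
  have hI3 : IndepFun (fun ω => (∑ d ∈ (a.divisors \ (Nat.gcd a b).divisors), ((d : ℝ) * (Z d ω : ℝ) - 1)) ^ 2) (fun ω => (∑ d ∈ (Nat.gcd a b).divisors, ((d : ℝ) * (Z d ω : ℝ) - 1)) ^ 2) P :=
    hblocks _ _ hdisj2 _ _ (hTmeasS (a.divisors \ (Nat.gcd a b).divisors) (a.divisors \ (Nat.gcd a b).divisors) subset_rfl 2) (hTmeasS (Nat.gcd a b).divisors (Nat.gcd a b).divisors subset_rfl 2)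
  have hI4 : IndepFun (fun ω => (∑ d ∈ (a.divisors \ (Nat.gcd a b).divisors), ((d : ℝ) * (Z d ω : ℝ) - 1)) ^ 1) (fun ω => (∑ d ∈ (Nat.gcd a b).divisors, ((d : ℝ) * (Z d ω : ℝ) - 1)) ^ 3) P :=
    hblocks _ _ hdisj2 _ _ (hTmeasS (a.divisors \ (Nat.gcd a b).divisors) (a.divisors \ (Nat.gcd a b).divisors) subset_rfl 1) (hTmeasS (Nat.gcd a b).divisors (Nat.gcd a b).divisors subset_rfl 3)
  -- integrability of products
  have kA2B02 : Integrable (fun ω => (∑ d ∈ a.divisors, ((d : ℝ) * (Z d ω : ℝ) - 1)) ^ 2 * (∑ d ∈ (b.divisors \ (Nat.gcd a b).divisors), ((d : ℝ) * (Z d ω : ℝ) - 1)) ^ 2) P := hI1.integrable_mul jA2 jB02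
  have kA2G : Integrable (fun ω => (∑ d ∈ a.divisors, ((d : ℝ) * (Z d ω : ℝ) - 1)) ^ 2 * (∑ d ∈ (Nat.gcd a b).divisors, ((d : ℝ) * (Z d ω : ℝ) - 1)) ^ 1) P := by
    have hbnd : Integrable (fun ω => ((∑ d ∈ a.divisors, ((d : ℝ) * (Z d ω : ℝ) - 1)) ^ 4 + (∑ d ∈ (Nat.gcd a b).divisors, ((d : ℝ) * (Z d ω : ℝ) - 1)) ^ 2) / 2) P := by
      exact (jA4.add jG2).div_const 2
    refine Integrable.mono' hbnd ?_ ?_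
    · exact (mA2G.mono (iSup₂_le fun i _ => hcomap_le i) le_rfl).aestronglyMeasurable
    · refine Filter.Eventually.of_forall fun ω => ?_
      simp only [pow_one]
      rw [Real.norm_eq_abs, abs_mul,
        abs_of_nonneg (sq_nonneg (∑ d ∈ a.divisors, ((d : ℝ) * (Z d ω : ℝ) - 1)))]
      nlinarith [sq_nonneg ((∑ d ∈ a.divisors, ((d : ℝ) * (Z d ω : ℝ) - 1)) ^ 2 -
          |∑ d ∈ (Nat.gcd a b).divisors, ((d : ℝ) * (Z d ω : ℝ) - 1)|),
        sq_abs (∑ d ∈ (Nat.gcd a b).divisors, ((d : ℝ) * (Z d ω : ℝ) - 1)),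
        abs_nonneg (∑ d ∈ (Nat.gcd a b).divisors, ((d : ℝ) * (Z d ω : ℝ) - 1))]
  have kA2GB0 : Integrable (fun ω => ((∑ d ∈ a.divisors, ((d : ℝ) * (Z d ω : ℝ) - 1)) ^ 2 * (∑ d ∈ (Nat.gcd a b).divisors, ((d : ℝ) * (Z d ω : ℝ) - 1)) ^ 1) * (∑ d ∈ (b.divisors \ (Nat.gcd a b).divisors), ((d : ℝ) * (Z d ω : ℝ) - 1)) ^ 1) P :=
    hI2.integrable_mul kA2G jB01
  have kA02G2 : Integrable (fun ω => (∑ d ∈ (a.divisors \ (Nat.gcd a b).divisors), ((d : ℝ) * (Z d ω : ℝ) - 1)) ^ 2 * (∑ d ∈ (Nat.gcd a b).divisors, ((d : ℝ) * (Z d ω : ℝ) - 1)) ^ 2) P := hI3.integrable_mul jA02 jG2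
  have kA0G3 : Integrable (fun ω => (∑ d ∈ (a.divisors \ (Nat.gcd a b).divisors), ((d : ℝ) * (Z d ω : ℝ) - 1)) ^ 1 * (∑ d ∈ (Nat.gcd a b).divisors, ((d : ℝ) * (Z d ω : ℝ) - 1)) ^ 3) P := hI4.integrable_mul jA01 jG3
  -- splitting identities
  have split3 : (fun ω => (∑ d ∈ a.divisors, ((d : ℝ) * (Z d ω : ℝ) - 1)) ^ 2 * (∑ d ∈ (Nat.gcd a b).divisors, ((d : ℝ) * (Z d ω : ℝ) - 1)) ^ 2) =
      fun ω => ((∑ d ∈ (a.divisors \ (Nat.gcd a b).divisors), ((d : ℝ) * (Z d ω : ℝ) - 1)) ^ 2 * (∑ d ∈ (Nat.gcd a b).divisors, ((d : ℝ) * (Z d ω : ℝ) - 1)) ^ 2 + 2 * ((∑ d ∈ (a.divisors \ (Nat.gcd a b).divisors), ((d : ℝ) * (Z d ω : ℝ) - 1)) ^ 1 * (∑ d ∈ (Nat.gcd a b).divisors, ((d : ℝ) * (Z d ω : ℝ) - 1)) ^ 3)) + (∑ d ∈ (Nat.gcd a b).divisors, ((d : ℝ) * (Z d ω : ℝ) -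 1)) ^ 4 := by
    funext ω
    rw [← Finset.sum_sdiff hga]
    ring
  have kA2G2 : Integrable (fun ω => (∑ d ∈ a.divisors, ((d : ℝ) * (Z d ω : ℝ) - 1)) ^ 2 * (∑ d ∈ (Nat.gcd a b).divisors, ((d : ℝ) * (Z d ω : ℝ) - 1)) ^ 2) P := by
    rw [split3]
    have c1 : Integrable (fun ω => (∑ d ∈ (a.divisors \ (Nat.gcd a b).divisors), ((d : ℝ) * (Z d ω : ℝ) - 1)) ^ 2 * (∑ d ∈ (Nat.gcd a b).divisors, ((d : ℝ) * (Z d ω : ℝ) - 1)) ^ 2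
        + 2 * ((∑ d ∈ (a.divisors \ (Nat.gcd a b).divisors), ((d : ℝ) * (Z d ω : ℝ) - 1)) ^ 1 * (∑ d ∈ (Nat.gcd a b).divisors, ((d : ℝ) * (Z d ω : ℝ) - 1)) ^ 3)) P := by
      exact kA02G2.add (kA0G3.const_mul 2)
    exact c1.add jG4
  have split1 : (fun ω => (∑ d ∈ a.divisors, ((d : ℝ) * (Z d ω : ℝ) - 1)) ^ 2 * (∑ d ∈ b.divisors, ((d : ℝ) * (Z d ω : ℝ) - 1)) ^ 2) =
      fun ω => ((∑ d ∈ a.divisors, ((d : ℝ) * (Z d ω : ℝ) - 1)) ^ 2 * (∑ d ∈ (b.divisors \ (Nat.gcd a b).divisors), ((d : ℝ) * (Z d ω : ℝ) - 1)) ^ 2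
        + 2 * (((∑ d ∈ a.divisors, ((d : ℝ) * (Z d ω : ℝ) - 1)) ^ 2 * (∑ d ∈ (Nat.gcd a b).divisors, ((d : ℝ) * (Z d ω : ℝ) - 1)) ^ 1) * (∑ d ∈ (b.divisors \ (Nat.gcd a b).divisors), ((d : ℝ) * (Z d ω : ℝ) - 1)) ^ 1)) + (∑ d ∈ a.divisors, ((d : ℝ) * (Z d ω : ℝ) - 1)) ^ 2 * (∑ d ∈ (Nat.gcd a b).divisors, ((d : ℝ) * (Z d ω : ℝ) - 1)) ^ 2 := by
    funext ω
    rw [← Finset.sum_sdiff hgb]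
    ring
  -- value of the third piece
  have c31 : Integrable (fun ω => (∑ d ∈ (a.divisors \ (Nat.gcd a b).divisors), ((d : ℝ) * (Z d ω : ℝ) - 1)) ^ 2 * (∑ d ∈ (Nat.gcd a b).divisors, ((d : ℝ) * (Z d ω : ℝ) - 1)) ^ 2
      + 2 * ((∑ d ∈ (a.divisors \ (Nat.gcd a b).divisors), ((d : ℝ) * (Z d ω : ℝ) - 1)) ^ 1 * (∑ d ∈ (Nat.gcd a b).divisors, ((d : ℝ) * (Z d ω : ℝ) - 1)) ^ 3)) P := by
    exact kA02G2.add (kA0G3.const_mul 2)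
  have p3 : ∫ ω, (∑ d ∈ (a.divisors \ (Nat.gcd a b).divisors), ((d : ℝ) * (Z d ω : ℝ) - 1)) ^ 2 * (∑ d ∈ (Nat.gcd a b).divisors, ((d : ℝ) * (Z d ω : ℝ) - 1)) ^ 2 ∂P
      = (∫ ω, (∑ d ∈ (a.divisors \ (Nat.gcd a b).divisors), ((d : ℝ) * (Z d ω : ℝ) - 1)) ^ 2 ∂P) * ∫ ω, (∑ d ∈ (Nat.gcd a b).divisors, ((d : ℝ) * (Z d ω : ℝ) - 1)) ^ 2 ∂P := hI3.integral_fun_mul_eq_mul_integral jA02.aestronglyMeasurable jG2.aestronglyMeasurable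
  have p4 : ∫ ω, (∑ d ∈ (a.divisors \ (Nat.gcd a b).divisors), ((d : ℝ) * (Z d ω : ℝ) - 1)) ^ 1 * (∑ d ∈ (Nat.gcd a b).divisors, ((d : ℝ) * (Z d ω : ℝ) - 1)) ^ 3 ∂P
      = (∫ ω, (∑ d ∈ (a.divisors \ (Nat.gcd a b).divisors), ((d : ℝ) * (Z d ω : ℝ) - 1)) ^ 1 ∂P) * ∫ ω, (∑ d ∈ (Nat.gcd a b).divisors, ((d : ℝ) * (Z d ω : ℝ) - 1)) ^ 3 ∂P := hI4.integral_fun_mul_eq_mul_integral jA01.aestronglyMeasurable jG3.aestronglyMeasurable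
  have hval3 : ∫ ω, (∑ d ∈ a.divisors, ((d : ℝ) * (Z d ω : ℝ) - 1)) ^ 2 * (∑ d ∈ (Nat.gcd a b).divisors, ((d : ℝ) * (Z d ω : ℝ) - 1)) ^ 2 ∂P
      = (∑ d ∈ (a.divisors \ (Nat.gcd a b).divisors), (d : ℝ)) * (∑ d ∈ (Nat.gcd a b).divisors, (d : ℝ))
        + ((∑ d ∈ (Nat.gcd a b).divisors, (d : ℝ) ^ 3) + 3 * (∑ d ∈ (Nat.gcd a b).divisors, (d : ℝ)) ^ 2) := by
    rw [split3, integral_add c31 jG4, integral_add kA02G2 (kA0G3.const_mul 2),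
      integral_const_mul, p3, p4, wA01, zero_mul, mul_zero, wA02, wG2, wG4]
    ring
  have p1 : ∫ ω, (∑ d ∈ a.divisors, ((d : ℝ) * (Z d ω : ℝ) - 1)) ^ 2 * (∑ d ∈ (b.divisors \ (Nat.gcd a b).divisors), ((d : ℝ) * (Z d ω : ℝ) - 1)) ^ 2 ∂P
      = (∫ ω, (∑ d ∈ a.divisors, ((d : ℝ) * (Z d ω : ℝ) - 1)) ^ 2 ∂P) * ∫ ω, (∑ d ∈ (b.divisors \ (Nat.gcd a b).divisors), ((d : ℝ) * (Z d ω : ℝ) - 1)) ^ 2 ∂P := hI1.integral_fun_mul_eq_mul_integral jA2.aestronglyMeasurable jB02.aestronglyMeasurable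
  have p2 : ∫ ω, ((∑ d ∈ a.divisors, ((d : ℝ) * (Z d ω : ℝ) - 1)) ^ 2 * (∑ d ∈ (Nat.gcd a b).divisors, ((d : ℝ) * (Z d ω : ℝ) - 1)) ^ 1) * (∑ d ∈ (b.divisors \ (Nat.gcd a b).divisors), ((d : ℝ) * (Z d ω : ℝ) - 1)) ^ 1 ∂P
      = (∫ ω, (∑ d ∈ a.divisors, ((d : ℝ) * (Z d ω : ℝ) - 1)) ^ 2 * (∑ d ∈ (Nat.gcd a b).divisors, ((d : ℝ) * (Z d ω : ℝ) - 1)) ^ 1 ∂P) * ∫ ω, (∑ d ∈ (b.divisors \ (Nat.gcd a b).divisors), ((d : ℝ) * (Z d ω : ℝ) - 1)) ^ 1 ∂P := hI2.integral_fun_mul_eq_mul_integral kA2G.aestronglyMeasurable jB01.aestronglyMeasurable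
  have c11 : Integrable (fun ω => (∑ d ∈ a.divisors, ((d : ℝ) * (Z d ω : ℝ) - 1)) ^ 2 * (∑ d ∈ (b.divisors \ (Nat.gcd a b).divisors), ((d : ℝ) * (Z d ω : ℝ) - 1)) ^ 2
      + 2 * (((∑ d ∈ a.divisors, ((d : ℝ) * (Z d ω : ℝ) - 1)) ^ 2 * (∑ d ∈ (Nat.gcd a b).divisors, ((d : ℝ) * (Z d ω : ℝ) - 1)) ^ 1) * (∑ d ∈ (b.divisors \ (Nat.gcd a b).divisors), ((d : ℝ) * (Z d ω : ℝ) - 1)) ^ 1)) P := by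
    exact kA2B02.add (kA2GB0.const_mul 2)
  have hval : ∫ ω, (∑ d ∈ a.divisors, ((d : ℝ) * (Z d ω : ℝ) - 1)) ^ 2 * (∑ d ∈ b.divisors, ((d : ℝ) * (Z d ω : ℝ) - 1)) ^ 2 ∂P
      = (∑ d ∈ a.divisors, (d : ℝ)) * (∑ d ∈ (b.divisors \ (Nat.gcd a b).divisors), (d : ℝ))
        + ((∑ d ∈ (a.divisors \ (Nat.gcd a b).divisors), (d : ℝ)) * (∑ d ∈ (Nat.gcd a b).divisors, (d : ℝ))
          + ((∑ d ∈ (Nat.gcd a b).divisors, (d : ℝ) ^ 3) + 3 * (∑ d ∈ (Nat.gcd a b).divisors, (d : ℝ)) ^ 2)) := by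
    rw [split1, integral_add c11 kA2G2, integral_add kA2B02 (kA2GB0.const_mul 2),
      integral_const_mul, p1, p2, wB01, mul_zero, wA2, wB02, hval3]
    ring
  -- arithmetic bounds
  have hnn : ∀ S : Finset ℕ, (0 : ℝ) ≤ ∑ d ∈ S, (d : ℝ) :=
    fun S => Finset.sum_nonneg fun d _ => by positivity
  have hnn3 : (0 : ℝ) ≤ ∑ d ∈ (Nat.gcd a b).divisors, (d : ℝ) ^ 3 :=
    Finset.sum_nonneg fun d _ => by positivity
  have hsub_le : ∀ S S' : Finset ℕ, S' ⊆ S →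
      (∑ d ∈ S', (d : ℝ)) ≤ ∑ d ∈ S, (d : ℝ) :=
    fun S S' h => Finset.sum_le_sum_of_subset_of_nonneg h fun i _ _ => by positivity
  have hB0B := hsub_le b.divisors (b.divisors \ (Nat.gcd a b).divisors) Finset.sdiff_subset
  have hA0A := hsub_le a.divisors (a.divisors \ (Nat.gcd a b).divisors) Finset.sdiff_subset
  have hGB := hsub_le b.divisors (Nat.gcd a b).divisors hgb
  have hGA := hsub_le a.divisors (Nat.gcd a b).divisors hga
  have hdivsum : ∀ c : ℕ, 0 < c → (∑ d ∈ c.divisors, (d : ℝ)) ≤ (c : ℝ) ^ 2 := by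
    intro c hc
    have hdle : ∀ d ∈ c.divisors, (d : ℝ) ≤ (c : ℝ) := fun d hd => by
      exact_mod_cast Nat.le_of_dvd hc (Nat.dvd_of_mem_divisors hd)
    have hcard : (c.divisors.card : ℝ) ≤ (c : ℝ) := by
      have h1 : c.divisors ⊆ Finset.Icc 1 c := fun d hd => Finset.mem_Icc.2
        ⟨Nat.pos_of_mem_divisors hd, Nat.le_of_dvd hc (Nat.dvd_of_mem_divisors hd)⟩
      have h2 : c.divisors.card ≤ c := by
        have h3 := Finset.card_le_card h1
        simpa [Nat.card_Icc] using h3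
      exact_mod_cast h2
    calc (∑ d ∈ c.divisors, (d : ℝ)) ≤ ∑ _d ∈ c.divisors, (c : ℝ) :=
          Finset.sum_le_sum hdle
      _ = (c.divisors.card : ℝ) * (c : ℝ) := by rw [Finset.sum_const, nsmul_eq_mul]
      _ ≤ (c : ℝ) * (c : ℝ) := mul_le_mul_of_nonneg_right hcard (by positivity)
      _ = (c : ℝ) ^ 2 := by ring
  have hsAa := hdivsum a ha
  have hsBb := hdivsum b hb
  have hsG3 : (∑ d ∈ (Nat.gcd a b).divisors, (d : ℝ) ^ 3) ≤ (a : ℝ) ^ 2 * (b : ℝ) ^ 2 := by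
    have hstep : ∀ d ∈ (Nat.gcd a b).divisors, (d : ℝ) ^ 3 ≤ (a : ℝ) ^ 2 * (d : ℝ) := by
      intro d hd
      have hd1 : (d : ℝ) ≤ (a : ℝ) := by
        exact_mod_cast Nat.le_of_dvd ha ((Nat.dvd_of_mem_divisors hd).trans
          (Nat.gcd_dvd_left a b))
      have hd0 : (0 : ℝ) ≤ (d : ℝ) := by positivity
      have h2 : (d : ℝ) ^ 2 ≤ (a : ℝ) ^ 2 := by nlinarith
      nlinarith [mul_le_mul_of_nonneg_right h2 hd0]
    calc (∑ d ∈ (Nat.gcd a b).divisors, (d : ℝ) ^ 3) ≤ ∑ d ∈ (Nat.gcd a b).divisors, (a : ℝ) ^ 2 * (d : ℝ) :=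
          Finset.sum_le_sum hstep
      _ = (a : ℝ) ^ 2 * ∑ d ∈ (Nat.gcd a b).divisors, (d : ℝ) := by rw [← Finset.mul_sum]
      _ ≤ (a : ℝ) ^ 2 * ((b : ℝ) ^ 2) := by
          refine mul_le_mul_of_nonneg_left ?_ (by positivity)
          exact le_trans hGB hsBb
  have t1 : (∑ d ∈ a.divisors, (d : ℝ)) * (∑ d ∈ (b.divisors \ (Nat.gcd a b).divisors), (d : ℝ))
      ≤ (∑ d ∈ a.divisors, (d : ℝ)) * (∑ d ∈ b.divisors, (d : ℝ)) :=
    mul_le_mul_of_nonneg_left hB0B (hnn a.divisors)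
  have t2 : (∑ d ∈ (a.divisors \ (Nat.gcd a b).divisors), (d : ℝ)) * (∑ d ∈ (Nat.gcd a b).divisors, (d : ℝ))
      ≤ (∑ d ∈ a.divisors, (d : ℝ)) * (∑ d ∈ b.divisors, (d : ℝ)) :=
    mul_le_mul hA0A hGB (hnn (Nat.gcd a b).divisors) (hnn a.divisors)
  have t3 : (∑ d ∈ (Nat.gcd a b).divisors, (d : ℝ)) ^ 2
      ≤ (∑ d ∈ a.divisors, (d : ℝ)) * (∑ d ∈ b.divisors, (d : ℝ)) := by
    nlinarith [mul_le_mul hGA hGB (hnn (Nat.gcd a b).divisors) (hnn a.divisors)]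
  have tab : (∑ d ∈ a.divisors, (d : ℝ)) * (∑ d ∈ b.divisors, (d : ℝ))
      ≤ (a : ℝ) ^ 2 * (b : ℝ) ^ 2 :=
    mul_le_mul hsAa hsBb (hnn b.divisors) (by positivity)
  have hc : ∀ (S : Finset ℕ) (ω : Ω),
      (∑ d ∈ S, (d : ℝ) * (Z d ω : ℝ)) - (S.card : ℝ)
        = ∑ d ∈ S, ((d : ℝ) * (Z d ω : ℝ) - 1) := by
    intro S ω
    rw [Finset.sum_sub_distrib, Finset.sum_const, nsmul_eq_mul, mul_one]
  constructor
  · simp only [hc]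
    rw [hval]
    linarith [t1, t2, t3, hnn3]
  · simp only [hc]
    rw [hval]
    have h0 : (0 : ℝ) ≤ (a : ℝ) ^ 2 * (b : ℝ) ^ 2 := by positivity
    linarith [t1, t2, t3, hsG3, tab]
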